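/- arXiv:2407.06408 — 6 statements merged into one kernel-verified Lean document; each statement's English description precedes it below -/
import Mathlib

section
/- (Theorem of the alternative.) Suppose the spectrahedron F = {X ∈ Sⁿ₊ : A(X) = b} is nonempty. Then exactly one of the following two statements holds: (1) there exists X ≻ 0 with A(X) = b; (2) there exists λ ∈ ℝᵐ with 0 ≠ A*(λ) ⪰ 0 and ⟨b, λ⟩ = 0. -/
open Matrix Set

noncomputable section

/-- The linear map `A X = (⟨Aᵢ, X⟩)ᵢ` (trace inner product). -/
def calA {n m : ℕ} (A : Fin m → Matrix (Fin n) (Fin n) ℝ)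
    (X : Matrix (Fin n) (Fin n) ℝ) : Fin m → ℝ := fun i => (A i * X).trace

/-- The adjoint map `A* λ = ∑ᵢ λᵢ Aᵢ`. -/
def adjA {n m : ℕ} (A : Fin m → Matrix (Fin n) (Fin n) ℝ) (lam : Fin m → ℝ) :
    Matrix (Fin n) (Fin n) ℝ := ∑ i, lam i • A i

variable {n m : ℕ}

lemma trace_adjA_mul (A : Fin m → Matrix (Fin n) (Fin n) ℝ) (lam : Fin m → ℝ)
    (X : Matrix (Fin n) (Fin n) ℝ) :
    (adjA A lam * X).trace = ∑ i, lam i * (A i * X).trace := by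
  simp [adjA, Finset.sum_mul, trace_sum, Matrix.smul_mul, trace_smul, smul_eq_mul]

lemma calA_add (A : Fin m → Matrix (Fin n) (Fin n) ℝ) (X Y : Matrix (Fin n) (Fin n) ℝ) :
    calA A (X + Y) = calA A X + calA A Y := by
  funext i; simp [calA, Matrix.mul_add, trace_add]

lemma calA_smul (A : Fin m → Matrix (Fin n) (Fin n) ℝ) (c : ℝ) (X : Matrix (Fin n) (Fin n) ℝ) :
    calA A (c • X) = c • calA A X := by
  funext i; simp [calA, Matrix.mul_smul, trace_smul]

lemma trace_mul_vecMulVec (M : Matrix (Fin n) (Fin n) ℝ) (v : Fin n → ℝ) :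
    (M * vecMulVec v v).trace = v ⬝ᵥ (M *ᵥ v) := by
  simp only [trace, diag_apply, mul_apply, vecMulVec_apply, mulVec, dotProduct, Finset.mul_sum]
  exact Finset.sum_congr rfl fun i _ => Finset.sum_congr rfl fun j _ => by ring

lemma posSemidef_vecMulVec (v : Fin n → ℝ) : (vecMulVec v v).PosSemidef := by
  rw [posSemidef_iff_dotProduct_mulVec]
  constructor
  · ext i j; simp [vecMulVec_apply, conjTranspose_apply, mul_comm]
  · intro x
    have h : star x ⬝ᵥ (vecMulVec v v *ᵥ x) = (v ⬝ᵥ x) ^ 2 := by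
      simp only [star_trivial, mulVec, dotProduct, vecMulVec_apply, Finset.mul_sum]
      rw [sq, Finset.sum_mul]
      refine Finset.sum_congr rfl fun i _ => ?_
      rw [Finset.mul_sum]
      exact Finset.sum_congr rfl fun j _ => by ring
    rw [h]; positivity

lemma diag_mul_mul_conjTranspose (B X : Matrix (Fin n) (Fin n) ℝ) (i : Fin n) :
    (B * X * Bᴴ) i i = (B i) ⬝ᵥ (X *ᵥ (B i)) := by
  simp only [mul_apply, conjTranspose_apply, star_trivial, mulVec, dotProduct,
    Finset.sum_mul, Finset.mul_sum]
  rw [Finset.sum_comm]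
  exact Finset.sum_congr rfl fun j _ => Finset.sum_congr rfl fun k _ => by ring

lemma posSemidef_iff_eq_transpose_mul_self {M : Matrix (Fin n) (Fin n) ℝ} :
    M.PosSemidef ↔ ∃ B : Matrix (Fin n) (Fin n) ℝ, M = Bᴴ * B := by
  open MatrixOrder Matrix.Norms.L2Operator in
  constructor
  · intro hM
    obtain ⟨B, hB⟩ := CStarAlgebra.nonneg_iff_eq_star_mul_self.mp hM.nonneg
    exact ⟨B, hB⟩
  · rintro ⟨B, rfl⟩
    exact posSemidef_conjTranspose_mul_self B

lemma trace_mul_psd_nonneg {M X : Matrix (Fin n) (Fin n) ℝ}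
    (hM : M.PosSemidef) (hX : X.PosSemidef) : 0 ≤ (M * X).trace := by
  obtain ⟨B, rfl⟩ := posSemidef_iff_eq_transpose_mul_self.mp hM
  rw [Matrix.mul_assoc, trace_mul_comm]
  rw [show (B * X * Bᴴ).trace = ∑ i, (B * X * Bᴴ) i i from rfl]
  refine Finset.sum_nonneg fun i _ => ?_
  rw [diag_mul_mul_conjTranspose]
  simpa using hX.dotProduct_mulVec_nonneg (B i)

lemma trace_mul_psd_pos {M X : Matrix (Fin n) (Fin n) ℝ}
    (hM : M.PosSemidef) (hM0 : M ≠ 0) (hX : X.PosDef) : 0 < (M * X).trace := by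
  obtain ⟨B, rfl⟩ := posSemidef_iff_eq_transpose_mul_self.mp hM
  have hB : B ≠ 0 := by rintro rfl; simp at hM0
  rw [Matrix.mul_assoc, trace_mul_comm]
  rw [show (B * X * Bᴴ).trace = ∑ i, (B * X * Bᴴ) i i from rfl]
  have hBrow : ∃ i, B i ≠ 0 := by
    by_contra h
    push_neg at h
    exact hB (by ext i j; simpa using congrFun (h i) j)
  obtain ⟨i0, hi0⟩ := hBrow
  refine Finset.sum_pos' (fun i _ => ?_) ⟨i0, Finset.mem_univ _, ?_⟩
  · rw [diag_mul_mul_conjTranspose]; simpa using hX.posSemidef.dotProduct_mulVec_nonneg (B i)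
  · rw [diag_mul_mul_conjTranspose]; simpa using hX.dotProduct_mulVec_pos hi0

lemma adjA_add (A : Fin m → Matrix (Fin n) (Fin n) ℝ) (x y : Fin m → ℝ) :
    adjA A (x + y) = adjA A x + adjA A y := by
  simp [adjA, add_smul, Finset.sum_add_distrib]

lemma adjA_smul (A : Fin m → Matrix (Fin n) (Fin n) ℝ) (c : ℝ) (x : Fin m → ℝ) :
    adjA A (c • x) = c • adjA A x := by
  simp [adjA, Finset.smul_sum, smul_smul]

lemma adjA_isSymm {A : Fin m → Matrix (Fin n) (Fin n) ℝ} (hA : ∀ i, (A i).IsSymm)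
    (lam : Fin m → ℝ) : (adjA A lam).IsSymm := by
  unfold Matrix.IsSymm adjA
  rw [transpose_sum]
  exact Finset.sum_congr rfl fun i _ => by rw [transpose_smul, (hA i).eq]

lemma adjA_eq_zero_iff {A : Fin m → Matrix (Fin n) (Fin n) ℝ} (hLI : LinearIndependent ℝ A)
    {lam : Fin m → ℝ} (h : adjA A lam = 0) : lam = 0 := by
  funext i
  exact Fintype.linearIndependent_iff.mp hLI lam h i

lemma symm_trace_sq_eq_zero {M : Matrix (Fin n) (Fin n) ℝ} (hs : M.IsSymm)
    (h : (M * M).trace = 0) : M = 0 := by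
  have key : ∑ i, ∑ j, (M i j)^2 = 0 := by
    rw [← h]
    simp only [trace, diag_apply, mul_apply]
    exact Finset.sum_congr rfl fun i _ => Finset.sum_congr rfl fun j _ => by
      rw [hs.apply i j, sq]
  ext i j
  have h1 : ∀ i ∈ Finset.univ, (0:ℝ) ≤ ∑ j, (M i j)^2 :=
    fun i _ => Finset.sum_nonneg fun j _ => sq_nonneg _
  have h2 := (Finset.sum_eq_zero_iff_of_nonneg h1).mp key i (Finset.mem_univ i)
  have h3 := (Finset.sum_eq_zero_iff_of_nonneg
    (fun j _ => sq_nonneg (M i j))).mp h2 j (Finset.mem_univ j)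
  simpa using pow_eq_zero_iff two_ne_zero |>.mp h3

/-- The composite endomorphism `μ ↦ calA A (adjA A μ)` as a linear map. -/
def Tmap (A : Fin m → Matrix (Fin n) (Fin n) ℝ) : (Fin m → ℝ) →ₗ[ℝ] (Fin m → ℝ) where
  toFun := fun μ => calA A (adjA A μ)
  map_add' := fun x y => by rw [adjA_add, calA_add]
  map_smul' := fun c x => by rw [adjA_smul, calA_smul]; rfl

lemma Tmap_injective {A : Fin m → Matrix (Fin n) (Fin n) ℝ}
    (hA : ∀ i, (A i).IsSymm) (hLI : LinearIndependent ℝ A) :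
    Function.Injective (Tmap A) := by
  rw [← LinearMap.ker_eq_bot, LinearMap.ker_eq_bot']
  intro μ hμ
  have h0 : (adjA A μ * adjA A μ).trace = 0 := by
    rw [trace_adjA_mul]
    have : ∀ i, (A i * adjA A μ).trace = 0 := fun i => congrFun hμ i
    simp [this]
  exact adjA_eq_zero_iff hLI (symm_trace_sq_eq_zero (adjA_isSymm hA μ) h0)

lemma Tmap_bijective {A : Fin m → Matrix (Fin n) (Fin n) ℝ}
    (hA : ∀ i, (A i).IsSymm) (hLI : LinearIndependent ℝ A) :
    Function.Bijective (Tmap A) :=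
  ⟨Tmap_injective hA hLI,
    (LinearMap.injective_iff_surjective_of_finrank_eq_finrank rfl).mp (Tmap_injective hA hLI)⟩

lemma dot_self_pos {v : Fin n → ℝ} (hv : v ≠ 0) : 0 < v ⬝ᵥ v := by
  obtain ⟨i, hi⟩ := Function.ne_iff.mp hv
  refine Finset.sum_pos' (fun j _ => mul_self_nonneg _) ⟨i, Finset.mem_univ _, ?_⟩
  exact mul_self_pos.mpr (by simpa using hi)

lemma continuous_quadForm (X : Matrix (Fin n) (Fin n) ℝ) :
    Continuous fun v : Fin n → ℝ => v ⬝ᵥ (X *ᵥ v) := by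
  simp only [dotProduct, mulVec]
  exact continuous_finset_sum _ fun i _ => (continuous_apply i).mul
    (continuous_finset_sum _ fun j _ => continuous_const.mul (continuous_apply j))

lemma posDef_lower_bound (hn : 0 < n) {X : Matrix (Fin n) (Fin n) ℝ} (hX : X.PosDef) :
    ∃ μ : ℝ, 0 < μ ∧ ∀ v : Fin n → ℝ, μ * (v ⬝ᵥ v) ≤ v ⬝ᵥ (X *ᵥ v) := by
  set S : Set (Fin n → ℝ) := {v | v ⬝ᵥ v = 1} with hS
  have hg : Continuous fun v : Fin n → ℝ => v ⬝ᵥ v := by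
    simp only [dotProduct]
    exact continuous_finset_sum _ fun i _ => (continuous_apply i).mul (continuous_apply i)
  have hclosed : IsClosed S := isClosed_eq hg continuous_const
  have hsub : S ⊆ Metric.closedBall 0 1 := by
    intro v hv
    rw [Metric.mem_closedBall, dist_zero_right]
    rw [pi_norm_le_iff_of_nonneg zero_le_one]
    intro i
    have h1 : (v i) * (v i) ≤ v ⬝ᵥ v := by
      refine Finset.single_le_sum (f := fun j => v j * v j)
        (fun j _ => mul_self_nonneg _) (Finset.mem_univ i)
    rw [hv] at h1
    rw [Real.norm_eq_abs]
    exact (sq_le_one_iff_abs_le_one (v i)).mp (by rwa [sq])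
  have hcompact : IsCompact S :=
    (isCompact_closedBall (0 : Fin n → ℝ) 1).of_isClosed_subset hclosed hsub
  have hne : S.Nonempty := by
    refine ⟨Pi.single ⟨0, hn⟩ 1, ?_⟩
    simp [hS, dotProduct, Pi.single_apply]
  obtain ⟨v0, hv0S, hmin⟩ := hcompact.exists_isMinOn hne (continuous_quadForm X).continuousOn
  have hv0ne : v0 ≠ 0 := by
    intro h; rw [h] at hv0S; simp [hS, dotProduct] at hv0S
  refine ⟨v0 ⬝ᵥ (X *ᵥ v0), by simpa using hX.dotProduct_mulVec_pos hv0ne, fun v => ?_⟩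
  by_cases hv : v = 0
  · simp [hv]
  · have hvv : 0 < v ⬝ᵥ v := dot_self_pos hv
    set t : ℝ := Real.sqrt (v ⬝ᵥ v) with ht
    have ht0 : 0 < t := Real.sqrt_pos.mpr hvv
    have ht2 : t * t = v ⬝ᵥ v := Real.mul_self_sqrt hvv.le
    have hw : (t⁻¹ • v) ∈ S := by
      simp only [hS, mem_setOf_eq, smul_dotProduct, dotProduct_smul, smul_eq_mul]
      field_simp
      rw [sq, ht2]
    have hle : v0 ⬝ᵥ (X *ᵥ v0) ≤ (t⁻¹ • v) ⬝ᵥ (X *ᵥ (t⁻¹ • v)) := hmin hw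
    have hfw : (t⁻¹ • v) ⬝ᵥ (X *ᵥ (t⁻¹ • v)) = t⁻¹ * (t⁻¹ * (v ⬝ᵥ (X *ᵥ v))) := by
      rw [mulVec_smul, smul_dotProduct, dotProduct_smul]; rfl
    rw [hfw] at hle
    have := mul_le_mul_of_nonneg_left hle (mul_pos ht0 ht0).le
    calc v0 ⬝ᵥ (X *ᵥ v0) * (v ⬝ᵥ v) = (t * t) * (v0 ⬝ᵥ (X *ᵥ v0)) := by rw [ht2]; ring
      _ ≤ (t * t) * (t⁻¹ * (t⁻¹ * (v ⬝ᵥ (X *ᵥ v)))) := this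
      _ = v ⬝ᵥ (X *ᵥ v) := by field_simp

lemma isSymm_isHermitian {M : Matrix (Fin n) (Fin n) ℝ} (h : M.IsSymm) : M.IsHermitian := by
  unfold Matrix.IsHermitian
  rw [conjTranspose_eq_transpose_of_trivial]
  exact h

lemma posDef_smul {X : Matrix (Fin n) (Fin n) ℝ} (hX : X.PosDef) {c : ℝ} (hc : 0 < c) :
    (c • X).PosDef := by
  refine Matrix.PosDef.of_dotProduct_mulVec_pos ?_ fun v hv => ?_
  · unfold Matrix.IsHermitian
    rw [conjTranspose_smul, hX.1]
    simp
  · rw [smul_mulVec, dotProduct_smul, smul_eq_mul]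
    exact mul_pos hc (by simpa using hX.dotProduct_mulVec_pos hv)

lemma posSemidef_smul {X : Matrix (Fin n) (Fin n) ℝ} (hX : X.PosSemidef) {c : ℝ} (hc : 0 ≤ c) :
    (c • X).PosSemidef := by
  refine Matrix.PosSemidef.of_dotProduct_mulVec_nonneg ?_ fun v => ?_
  · unfold Matrix.IsHermitian
    rw [conjTranspose_smul, hX.1]
    simp
  · rw [smul_mulVec, dotProduct_smul, smul_eq_mul]
    exact mul_nonneg hc (by simpa using hX.dotProduct_mulVec_nonneg v)

lemma quad_abs_le (E : Matrix (Fin n) (Fin n) ℝ) (v : Fin n → ℝ) :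
    |v ⬝ᵥ (E *ᵥ v)| ≤ (∑ i, ∑ j, |E i j|) * (v ⬝ᵥ v) := by
  have hvv : ∀ i j : Fin n, |v i * v j| ≤ v ⬝ᵥ v := by
    intro i j
    have h1 : v i * v i ≤ v ⬝ᵥ v :=
      Finset.single_le_sum (f := fun k => v k * v k) (fun k _ => mul_self_nonneg _)
        (Finset.mem_univ i)
    have h2 : v j * v j ≤ v ⬝ᵥ v :=
      Finset.single_le_sum (f := fun k => v k * v k) (fun k _ => mul_self_nonneg _)
        (Finset.mem_univ j)
    rw [abs_mul]
    nlinarith [abs_nonneg (v i), abs_nonneg (v j), abs_mul_abs_self (v i),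
      abs_mul_abs_self (v j), sq_nonneg (|v i| - |v j|)]
  rw [show (∑ i, ∑ j, |E i j|) * (v ⬝ᵥ v) = ∑ i, ∑ j, |E i j| * (v ⬝ᵥ v) by
    rw [Finset.sum_mul]; exact Finset.sum_congr rfl fun i _ => by rw [Finset.sum_mul]]
  rw [show v ⬝ᵥ (E *ᵥ v) = ∑ i, ∑ j, v i * (E i j * v j) by
    simp [dotProduct, mulVec, Finset.mul_sum]]
  refine (Finset.abs_sum_le_sum_abs _ _).trans (Finset.sum_le_sum fun i _ => ?_)
  refine (Finset.abs_sum_le_sum_abs _ _).trans (Finset.sum_le_sum fun j _ => ?_)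
  have : v i * (E i j * v j) = E i j * (v i * v j) := by ring
  rw [this, abs_mul]
  exact mul_le_mul_of_nonneg_left (hvv i j) (abs_nonneg _)

lemma adjA_apply (A : Fin m → Matrix (Fin n) (Fin n) ℝ) (μ : Fin m → ℝ) (i j : Fin n) :
    adjA A μ i j = ∑ k, μ k * A k i j := by
  simp [adjA, Matrix.sum_apply]

lemma adjA_zero (A : Fin m → Matrix (Fin n) (Fin n) ℝ) : adjA A 0 = 0 := by
  simp [adjA]

lemma isOpen_image_posDef (hn : 0 < n) {A : Fin m → Matrix (Fin n) (Fin n) ℝ}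
    (hA : ∀ i, (A i).IsSymm) (hLI : LinearIndependent ℝ A) :
    IsOpen (calA A '' {X : Matrix (Fin n) (Fin n) ℝ | X.PosDef}) := by
  classical
  set e := LinearEquiv.ofBijective (Tmap A) (Tmap_bijective hA hLI) with he
  set R : (Fin m → ℝ) → Matrix (Fin n) (Fin n) ℝ := fun d => adjA A (e.symm d) with hRdef
  have hcalAR : ∀ d, calA A (R d) = d := fun d => e.apply_symm_apply d
  have hsymmcont : Continuous fun d : Fin m → ℝ => (e.symm : (Fin m → ℝ) →ₗ[ℝ] (Fin m → ℝ)) d :=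
    LinearMap.continuous_of_finiteDimensional _
  have hNcont : Continuous fun d : Fin m → ℝ => ∑ i, ∑ j, |R d i j| := by
    refine continuous_finset_sum _ fun i _ => continuous_finset_sum _ fun j _ => ?_
    have : (fun d : Fin m → ℝ => R d i j)
        = fun d => ∑ k, ((e.symm : (Fin m → ℝ) →ₗ[ℝ] (Fin m → ℝ)) d) k * A k i j := by
      funext d; show adjA A (e.symm d) i j = _; rw [adjA_apply]; rfl
    rw [show (fun d : Fin m → ℝ => |R d i j|)
        = fun d => |(fun d : Fin m → ℝ => R d i j) d| from rfl, this]
    exact (continuous_finset_sum _ fun k _ =>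
      ((continuous_apply k).comp hsymmcont).mul continuous_const).abs
  rw [isOpen_iff_forall_mem_open]
  rintro c ⟨X, hX, hc⟩
  obtain ⟨μ, hμ, hlow⟩ := posDef_lower_bound hn hX
  refine ⟨{c' | ∑ i, ∑ j, |R (c' - c) i j| < μ}, ?_, ?_, ?_⟩
  · intro c' hc'
    simp only [mem_setOf_eq] at hc'
    refine ⟨X + R (c' - c), Matrix.PosDef.of_dotProduct_mulVec_pos ?_ ?_, ?_⟩
    · exact hX.1.add (isSymm_isHermitian (adjA_isSymm hA _))
    · intro v hv
      have h1 := hlow v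
      have h2 := quad_abs_le (R (c' - c)) v
      have hvpos := dot_self_pos hv
      have h3 := neg_abs_le (v ⬝ᵥ (R (c' - c) *ᵥ v))
      have h4 : 0 < (μ - ∑ i, ∑ j, |R (c' - c) i j|) * (v ⬝ᵥ v) :=
        mul_pos (sub_pos.mpr hc') hvpos
      rw [star_trivial, add_mulVec, dotProduct_add]
      nlinarith
    · rw [calA_add, hcalAR, hc]
      abel
  · have heq : {c' : Fin m → ℝ | ∑ i, ∑ j, |R (c' - c) i j| < μ}
        = (fun c' : Fin m → ℝ => ∑ i, ∑ j, |R (c' - c) i j|) ⁻¹' (Iio μ) := rfl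
    rw [heq]
    exact isOpen_Iio.preimage (hNcont.comp (continuous_id.sub continuous_const))
  · simp only [mem_setOf_eq, sub_self, hRdef, map_zero, adjA_zero]
    simpa using hμ

lemma convex_image_posDef (A : Fin m → Matrix (Fin n) (Fin n) ℝ) :
    Convex ℝ (calA A '' {X : Matrix (Fin n) (Fin n) ℝ | X.PosDef}) := by
  rintro x ⟨X, hX, rfl⟩ y ⟨Y, hY, rfl⟩ a c ha hc hac
  refine ⟨a • X + c • Y, ?_, by rw [calA_add, calA_smul, calA_smul]⟩
  rcases eq_or_lt_of_le ha with h | h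
  · have hc1 : c = 1 := by linarith
    simp only [mem_setOf_eq, ← h, hc1, zero_smul, zero_add, one_smul]
    exact hY
  · exact (posDef_smul hX h).add_posSemidef (posSemidef_smul hY.posSemidef hc)

/-- theorem of the alternative: if the spectrahedron
`F = {X ⪰ 0 : A X = b}` is nonempty, then exactly one of the following holds:
(1) ∃ X ≻ 0 with A X = b; (2) ∃ λ with 0 ≠ A* λ ⪰ 0 and ⟨b, λ⟩ = 0. -/
theorem stmt2 {n m : ℕ} (A : Fin m → Matrix (Fin n) (Fin n) ℝ)
    (hA : ∀ i, (A i).IsSymm) (hLI : LinearIndependent ℝ A) (b : Fin m → ℝ)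
    (hF : ∃ X : Matrix (Fin n) (Fin n) ℝ, X.PosSemidef ∧ calA A X = b) :
    Xor'
      (∃ X : Matrix (Fin n) (Fin n) ℝ, X.PosDef ∧ calA A X = b)
      (∃ lam : Fin m → ℝ, adjA A lam ≠ 0 ∧ (adjA A lam).PosSemidef ∧
        ∑ i, b i * lam i = 0) := by
  by_cases h1 : ∃ X : Matrix (Fin n) (Fin n) ℝ, X.PosDef ∧ calA A X = b
  · refine Or.inl ⟨h1, ?_⟩
    rintro ⟨lam, hne, hpsd, hsum⟩
    obtain ⟨X, hX, hAX⟩ := h1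
    have ht : (adjA A lam * X).trace = ∑ i, b i * lam i := by
      rw [trace_adjA_mul, ← hAX]
      exact Finset.sum_congr rfl fun i _ => by simp [calA, mul_comm]
    have hpos := trace_mul_psd_pos hpsd hne hX
    rw [ht, hsum] at hpos
    exact lt_irrefl 0 hpos
  · have hn : 0 < n := by
      rcases Nat.eq_zero_or_pos n with h0 | h
      swap
      · exact h
      exfalso
      obtain ⟨X0, hX0, hAX0⟩ := hF
      refine h1 ⟨X0, ⟨hX0.1, fun x hx => absurd ?_ hx⟩, hAX0⟩
      subst h0
      ext i
      exact i.elim0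
    have hconv := convex_image_posDef A
    have hopen := isOpen_image_posDef hn hA hLI
    have hbnot : b ∉ calA A '' {X : Matrix (Fin n) (Fin n) ℝ | X.PosDef} := by
      rintro ⟨X, hX, hAX⟩
      exact h1 ⟨X, hX, hAX⟩
    obtain ⟨f, hf⟩ := geometric_hahn_banach_open_point hconv hopen hbnot
    set g : Fin m → ℝ := fun i => f (fun j => if i = j then 1 else 0) with hg
    have hfeq : ∀ y : Fin m → ℝ, f y = ∑ i, y i * g i := by
      intro y
      have h := LinearMap.pi_apply_eq_sum_univ (f : (Fin m → ℝ) →ₗ[ℝ] ℝ) y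
      simpa [smul_eq_mul, hg] using h
    set lam : Fin m → ℝ := fun i => -(g i) with hlam
    set M := adjA A lam with hM
    set γ : ℝ := ∑ i, b i * lam i with hγ
    have hone : (1 : Matrix (Fin n) (Fin n) ℝ).PosDef := Matrix.PosDef.one
    have htr : ∀ X : Matrix (Fin n) (Fin n) ℝ, (M * X).trace = -(f (calA A X)) := by
      intro X
      rw [hM, trace_adjA_mul, hfeq, ← Finset.sum_neg_distrib]
      exact Finset.sum_congr rfl fun i _ => by simp [hlam, calA]; ring
    have hγf : γ = -(f b) := by
      rw [hγ, hfeq, ← Finset.sum_neg_distrib]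
      exact Finset.sum_congr rfl fun i _ => by simp [hlam]
    have key : ∀ X : Matrix (Fin n) (Fin n) ℝ, X.PosDef → γ < (M * X).trace := by
      intro X hX
      rw [htr, hγf]
      exact neg_lt_neg (hf _ ⟨X, hX, rfl⟩)
    have key2 : ∀ X : Matrix (Fin n) (Fin n) ℝ, X.PosDef → 0 ≤ (M * X).trace := by
      intro X hX
      by_contra hneg
      push_neg at hneg
      set t : ℝ := (γ - |γ| - 1) / (M * X).trace with htdef
      have ht : 0 < t :=
        div_pos_iff.mpr (Or.inr ⟨by linarith [abs_nonneg γ, le_abs_self γ], hneg⟩)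
      have h := key (t • X) (posDef_smul hX ht)
      rw [Matrix.mul_smul, trace_smul, smul_eq_mul, htdef,
        div_mul_cancel₀ _ (ne_of_lt hneg)] at h
      linarith [abs_nonneg γ]
    have key3 : γ ≤ 0 := by
      by_contra hγpos
      push_neg at hγpos
      have htrM : ∀ t : ℝ, 0 < t → γ < t * M.trace := by
        intro t ht
        have h := key (t • 1) (posDef_smul hone ht)
        rwa [Matrix.mul_smul, trace_smul, smul_eq_mul, Matrix.mul_one] at h
      rcases le_or_gt M.trace 0 with hM0 | hM0
      · have := htrM 1 one_pos
        nlinarith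
      · have h := htrM (γ / (2 * M.trace)) (by positivity)
        have heq : γ / (2 * M.trace) * M.trace = γ / 2 := by
          field_simp
        rw [heq] at h
        linarith
    have key4 : ∀ X : Matrix (Fin n) (Fin n) ℝ, X.PosSemidef → 0 ≤ (M * X).trace := by
      intro X hX
      by_contra hneg
      push_neg at hneg
      have hε : ∀ ε : ℝ, 0 < ε → 0 ≤ (M * X).trace + ε * M.trace := by
        intro ε hεp
        have h := key2 (X + ε • 1) (Matrix.PosDef.posSemidef_add hX (posDef_smul hone hεp))
        rwa [Matrix.mul_add, trace_add, Matrix.mul_smul, trace_smul, smul_eq_mul,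
          Matrix.mul_one] at h
      rcases le_or_gt M.trace 0 with hM0 | hM0
      · have := hε 1 one_pos
        nlinarith
      · have h := hε (-(M * X).trace / (2 * M.trace)) (div_pos (by linarith) (by linarith : (0:ℝ) < 2 * M.trace))
        have heq : -(M * X).trace / (2 * M.trace) * M.trace = -(M * X).trace / 2 := by
          field_simp
        rw [heq] at h
        linarith
    have hMpsd : M.PosSemidef := by
      refine Matrix.PosSemidef.of_dotProduct_mulVec_nonneg (isSymm_isHermitian (adjA_isSymm hA lam)) fun x => ?_
      rw [star_trivial, ← trace_mul_vecMulVec]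
      exact key4 _ (posSemidef_vecMulVec x)
    have hMne : M ≠ 0 := by
      intro h0
      have hlam0 : lam = 0 := adjA_eq_zero_iff hLI h0
      have hg0 : ∀ i, g i = 0 := by
        intro i
        have h := congrFun hlam0 i
        simpa [hlam] using h
      have h := hf _ ⟨1, hone, rfl⟩
      rw [hfeq, hfeq] at h
      simp [hg0] at h
    have hγ0 : γ = 0 := by
      obtain ⟨X0, hX0, hAX0⟩ := hF
      have heq : γ = (M * X0).trace := by
        rw [hM, trace_adjA_mul, hγ, ← hAX0]
        exact Finset.sum_congr rfl fun i _ => by simp [calA, mul_comm]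
      have h4 := trace_mul_psd_nonneg hMpsd hX0
      rw [← heq] at h4
      linarith
    exact Or.inr ⟨⟨lam, hMne, hMpsd, hγ0⟩, h1⟩
end
end

section
/- (Projection onto a face of the semidefinite cone.) Let V be an n×r real matrix with orthonormal columns (VᵀV = I_r) and let f = {V R Vᵀ : R ∈ S^r₊} be the corresponding face of Sⁿ₊. Then for every U ∈ Sⁿ, the nearest point in f to U is P_f(U) = V · P_{S^r₊}(Vᵀ U V) · Vᵀ. -/
open Matrix Set

noncomputable section

/-- Squared Frobenius norm via the trace inner product. -/
def frobSq {k : ℕ} (M : Matrix (Fin k) (Fin k) ℝ) : ℝ := (Mᵀ * M).trace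

/-- `P` is a nearest point to `X` in `C` (Frobenius norm). -/
def IsProjOn {k : ℕ} (C : Set (Matrix (Fin k) (Fin k) ℝ))
    (X P : Matrix (Fin k) (Fin k) ℝ) : Prop :=
  P ∈ C ∧ ∀ Y ∈ C, frobSq (X - P) ≤ frobSq (X - Y)

/-- Pythagoras-type identity: for any `S`,
`‖U − V S Vᵀ‖² = ‖U‖² − ‖VᵀUV‖² + ‖VᵀUV − S‖²`. -/
lemma frobSq_key {n r : ℕ} (V : Matrix (Fin n) (Fin r) ℝ) (hV : Vᵀ * V = 1)
    (U : Matrix (Fin n) (Fin n) ℝ) (S : Matrix (Fin r) (Fin r) ℝ) :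
    frobSq (U - V * S * Vᵀ)
      = frobSq U - frobSq (Vᵀ * U * V) + frobSq (Vᵀ * U * V - S) := by
  have c1 : (Uᵀ * (V * S * Vᵀ)).trace = ((Vᵀ * U * V)ᵀ * S).trace := by
    have h := Matrix.trace_mul_cycle Uᵀ (V * S) Vᵀ
    simp only [Matrix.mul_assoc] at h
    simp only [Matrix.transpose_mul, Matrix.transpose_transpose, Matrix.mul_assoc]
    exact h
  have c2 : ((V * S * Vᵀ)ᵀ * U).trace = (Sᵀ * (Vᵀ * U * V)).trace := by
    have h := Matrix.trace_mul_cycle (Sᵀ * Vᵀ) U V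
    simp only [Matrix.transpose_mul, Matrix.transpose_transpose, Matrix.mul_assoc] at h ⊢
    exact h.symm
  have c3 : ((V * S * Vᵀ)ᵀ * (V * S * Vᵀ)).trace = (Sᵀ * S).trace := by
    have e : (V * Sᵀ * Vᵀ) * (V * S * Vᵀ) = V * (Sᵀ * S) * Vᵀ := by
      rw [show (V * Sᵀ * Vᵀ) * (V * S * Vᵀ) = V * Sᵀ * (Vᵀ * V) * (S * Vᵀ) by
        simp [Matrix.mul_assoc], hV]
      simp [Matrix.mul_assoc]
    have h := Matrix.trace_mul_cycle V (Sᵀ * S) Vᵀ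
    simp only [Matrix.transpose_mul, Matrix.transpose_transpose]
    calc (V * (Sᵀ * Vᵀ) * (V * S * Vᵀ)).trace
        = (V * (Sᵀ * S) * Vᵀ).trace := by rw [← e]; simp [Matrix.mul_assoc]
      _ = (Vᵀ * V * (Sᵀ * S)).trace := h
      _ = (Sᵀ * S).trace := by rw [hV, Matrix.one_mul]
  simp only [frobSq, Matrix.transpose_sub, Matrix.sub_mul, Matrix.mul_sub,
    Matrix.trace_sub, c1, c2, c3]
  ring

/-- projection onto a face of the PSD cone: if `V` is `n × r` with
orthonormal columns and `f = {V R Vᵀ : R ∈ S^r₊}`, then for every `U ∈ Sⁿ` the nearest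
point in `f` to `U` is `V ⬝ P_{S^r₊}(Vᵀ U V) ⬝ Vᵀ`. -/
theorem stmt4 {n r : ℕ} (V : Matrix (Fin n) (Fin r) ℝ) (hV : Vᵀ * V = 1)
    (U : Matrix (Fin n) (Fin n) ℝ) (hU : U.IsSymm)
    (Pr : Matrix (Fin r) (Fin r) ℝ)
    (hPr : IsProjOn {R : Matrix (Fin r) (Fin r) ℝ | R.PosSemidef} (Vᵀ * U * V) Pr) :
    IsProjOn {Y : Matrix (Fin n) (Fin n) ℝ |
        ∃ R : Matrix (Fin r) (Fin r) ℝ, R.PosSemidef ∧ Y = V * R * Vᵀ}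
      U (V * Pr * Vᵀ) := by
  obtain ⟨hPrmem, hPrmin⟩ := hPr
  refine ⟨⟨Pr, hPrmem, rfl⟩, ?_⟩
  rintro Y ⟨R, hR, rfl⟩
  rw [frobSq_key V hV U Pr, frobSq_key V hV U R]
  have := hPrmin R hR
  linarith
end
end

section
/- Let W ∈ Sⁿ, let F = {X ⪰ 0 : A(X) = b} be nonempty, and define F(y) = A(P_{Sⁿ₊}(W + A*(y))) − b for y ∈ ℝᵐ. Then strong duality (zero duality gap together with dual attainment) holds for the best approximation problem min{½‖X − W‖² : X ∈ F} if and only if F has a root ȳ ∈ ℝᵐ with F(ȳ) = 0; moreover, in that case the unique optimal solution is X* = P_{Sⁿ₊}(W + A*(ȳ)), and equivalently: ȳ is a root of F if and only if the triple (X̄, ȳ, Z̄) with X̄ = P_{Sⁿ₊}(W + A*(ȳ)) and Z̄ = −P_{Sⁿ₋}(W + A*(ȳ)) satisfies the KKT conditions X̄ − W − A*(ȳ) − Z̄ = 0, Z̄ ⪰ 0, A(X̄) = b, X̄ ⪰ 0, ⟨Z̄, X̄⟩ = 0. -/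
open Matrix Set

noncomputable section

/-- The spectrahedron `F = {X ⪰ 0 : A X = b}`. -/
def spectra {n m : ℕ} (A : Fin m → Matrix (Fin n) (Fin n) ℝ) (b : Fin m → ℝ) :
    Set (Matrix (Fin n) (Fin n) ℝ) := {X | X.PosSemidef ∧ calA A X = b}

/-- The dual functional `φ(y,Z) = −½‖Z + A*y‖² + ⟨y, b − A(W)⟩ − ⟨Z, W⟩`. -/
def dualPhi {n m : ℕ} (A : Fin m → Matrix (Fin n) (Fin n) ℝ) (b : Fin m → ℝ)
    (W : Matrix (Fin n) (Fin n) ℝ) (y : Fin m → ℝ) (Z : Matrix (Fin n) (Fin n) ℝ) : ℝ :=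
  -(1 / 2) * frobSq (Z + adjA A y) + (∑ i, y i * (b i - calA A W i)) - (Z * W).trace

namespace St8
variable {k : ℕ}
abbrev Mat (k : ℕ) := Matrix (Fin k) (Fin k) ℝ

def ip (X Y : Mat k) : ℝ := (Xᵀ * Y).trace

lemma ip_comm (X Y : Mat k) : ip X Y = ip Y X := by
  rw [ip, ip, ← Matrix.trace_transpose (Xᵀ * Y), Matrix.transpose_mul,
    Matrix.transpose_transpose]

lemma frobSq_eq_ip (X : Mat k) : frobSq X = ip X X := rfl

lemma ip_add_left (X Y Z : Mat k) : ip (X + Y) Z = ip X Z + ip Y Z := by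
  simp [ip, Matrix.transpose_add, Matrix.add_mul]

lemma ip_sub_left (X Y Z : Mat k) : ip (X - Y) Z = ip X Z - ip Y Z := by
  simp [ip, Matrix.transpose_sub, Matrix.sub_mul]

lemma ip_add_right (X Y Z : Mat k) : ip X (Y + Z) = ip X Y + ip X Z := by
  simp [ip, Matrix.mul_add]

lemma ip_sub_right (X Y Z : Mat k) : ip X (Y - Z) = ip X Y - ip X Z := by
  simp [ip, Matrix.mul_sub]

lemma ip_smul_left (c : ℝ) (X Z : Mat k) : ip (c • X) Z = c * ip X Z := by
  simp [ip, Matrix.transpose_smul, Matrix.smul_mul]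

lemma ip_smul_right (c : ℝ) (X Z : Mat k) : ip X (c • Z) = c * ip X Z := by
  simp [ip, Matrix.mul_smul]

lemma ip_neg_left (X Z : Mat k) : ip (-X) Z = -ip X Z := by
  simp [ip, Matrix.transpose_neg, Matrix.neg_mul]

lemma ip_zero_left (Z : Mat k) : ip 0 Z = 0 := by simp [ip]

lemma frobSq_sub (X Y : Mat k) : frobSq (X - Y) = frobSq X - 2 * ip X Y + frobSq Y := by
  have h : ip Y X = ip X Y := ip_comm Y X
  simp only [frobSq_eq_ip, ip_sub_left, ip_sub_right, h]; ring

lemma frobSq_add (X Y : Mat k) : frobSq (X + Y) = frobSq X + 2 * ip X Y + frobSq Y := by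
  have h : ip Y X = ip X Y := ip_comm Y X
  simp only [frobSq_eq_ip, ip_add_left, ip_add_right, h]; ring

lemma frobSq_smul (c : ℝ) (X : Mat k) : frobSq (c • X) = c ^ 2 * frobSq X := by
  simp only [frobSq_eq_ip, ip_smul_left, ip_smul_right]; ring

lemma frobSq_nonneg (X : Mat k) : 0 ≤ frobSq X := by
  rw [frobSq, Matrix.trace]
  refine Finset.sum_nonneg fun j _ => ?_
  simp only [Matrix.diag_apply, Matrix.mul_apply, Matrix.transpose_apply]
  exact Finset.sum_nonneg fun i _ => mul_self_nonneg _

lemma frobSq_eq_zero {X : Mat k} (h : frobSq X = 0) : X = 0 := by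
  have key : ∀ i j, X i j = 0 := by
    intro i j
    by_contra hne
    have hpos : 0 < X i j * X i j := mul_self_pos.mpr hne
    have hlt : 0 < frobSq X := by
      rw [frobSq, Matrix.trace]
      refine Finset.sum_pos' (fun a _ => ?_) ⟨j, Finset.mem_univ j, ?_⟩
      · simp only [Matrix.diag_apply, Matrix.mul_apply, Matrix.transpose_apply]
        exact Finset.sum_nonneg fun i _ => mul_self_nonneg _
      · simp only [Matrix.diag_apply, Matrix.mul_apply, Matrix.transpose_apply]
        exact Finset.sum_pos' (fun a _ => mul_self_nonneg _) ⟨i, Finset.mem_univ i, hpos⟩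
    linarith
  ext i j; exact key i j


lemma psd_isSymm {X : Mat k} (h : X.PosSemidef) : X.IsSymm := by
  have := h.1
  rwa [Matrix.IsHermitian, Matrix.conjTranspose_eq_transpose_of_trivial] at this

lemma isHermitian_of_isSymm {X : Mat k} (h : X.IsSymm) : X.IsHermitian := by
  rwa [Matrix.IsHermitian, Matrix.conjTranspose_eq_transpose_of_trivial]

lemma psd_smul {X : Mat k} (h : X.PosSemidef) {c : ℝ} (hc : 0 ≤ c) :
    (c • X).PosSemidef := by
  refine Matrix.PosSemidef.of_dotProduct_mulVec_nonneg ?_ fun x => ?_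
  · exact isHermitian_of_isSymm ((psd_isSymm h).smul c)
  · have := h.dotProduct_mulVec_nonneg x
    simp only [Matrix.smul_mulVec, dotProduct_smul, smul_eq_mul]
    exact mul_nonneg hc this

lemma psd_trace_nonneg {X : Mat k} (h : X.PosSemidef) : 0 ≤ X.trace := by
  rw [Matrix.trace]
  refine Finset.sum_nonneg fun i _ => ?_
  have := h.dotProduct_mulVec_nonneg (Pi.single i 1)
  simpa [dotProduct, Matrix.mulVec, Pi.single_apply, Finset.mul_sum] using this

lemma trace_mul_psd {X Z : Mat k} (hZ : Z.PosSemidef) (hX : X.PosSemidef) :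
    0 ≤ (Z * X).trace := by
  obtain ⟨r, v, hv⟩ := Matrix.posSemidef_iff_eq_sum_vecMulVec.mp hZ
  rw [hv, Matrix.sum_mul, Matrix.trace_sum]
  refine Finset.sum_nonneg fun a _ => ?_
  have := hX.dotProduct_mulVec_nonneg (v a)
  simp only [star_trivial] at this ⊢
  convert this using 1
  rw [Matrix.trace]
  simp only [Matrix.diag_apply, Matrix.mul_apply, Matrix.vecMulVec_apply, dotProduct,
    Matrix.mulVec, Finset.mul_sum, Finset.sum_mul]
  rw [Finset.sum_comm]
  exact Finset.sum_congr rfl fun j _ => Finset.sum_congr rfl fun i _ => by ring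

lemma ip_of_symm_left {X : Mat k} (h : X.IsSymm) (Y : Mat k) :
    ip X Y = (X * Y).trace := by rw [ip, h]

lemma ip_psd_psd {X Z : Mat k} (hZ : Z.PosSemidef) (hX : X.PosSemidef) :
    0 ≤ ip Z X := by
  rw [ip_of_symm_left (psd_isSymm hZ)]; exact trace_mul_psd hZ hX

lemma psd_outer (v : Fin k → ℝ) : (Matrix.vecMulVec v v).PosSemidef := by
  have hmv : ∀ x : Fin k → ℝ, Matrix.vecMulVec v v *ᵥ x = (v ⬝ᵥ x) • v := by
    intro x; ext i
    simp only [Matrix.vecMulVec_apply, Matrix.mulVec, dotProduct, Pi.smul_apply,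
      smul_eq_mul, Finset.mul_sum]
    rw [Finset.sum_mul]
    exact Finset.sum_congr rfl fun j _ => by ring
  refine Matrix.PosSemidef.of_dotProduct_mulVec_nonneg (isHermitian_of_isSymm ?_) fun x => ?_
  · ext i j; simp [Matrix.vecMulVec_apply, mul_comm]
  · rw [hmv]
    simp only [dotProduct_smul, star_trivial, smul_eq_mul]
    have : x ⬝ᵥ v = v ⬝ᵥ x := dotProduct_comm x v
    rw [this]; exact mul_self_nonneg _

lemma ip_outer (S : Mat k) (v : Fin k → ℝ) :
    ip S (Matrix.vecMulVec v v) = v ⬝ᵥ (S *ᵥ v) := by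
  rw [ip, Matrix.trace]
  simp only [Matrix.diag_apply, Matrix.mul_apply, Matrix.vecMulVec_apply, dotProduct,
    Matrix.mulVec, Matrix.transpose_apply]
  rw [Finset.sum_comm]
  refine Finset.sum_congr rfl fun j _ => ?_
  rw [Finset.mul_sum]
  exact Finset.sum_congr rfl fun i _ => by ring

-- projection lemmas
lemma proj_unique {C : Set (Mat k)} {M P P' : Mat k}
    (hP : IsProjOn C M P) (hP' : P' ∈ C)
    (hopt : ∀ Y ∈ C, frobSq (M - P') ≤ frobSq (M - Y))
    (hmid : (1 / 2 : ℝ) • (P + P') ∈ C) : P = P' := by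
  have h1 : frobSq (M - P) ≤ frobSq (M - P') := hP.2 P' hP'
  have h2 : frobSq (M - P') ≤ frobSq (M - P) := hopt P hP.1
  have hv : frobSq (M - P') = frobSq (M - P) := le_antisymm h2 h1
  have hmid1 : M - (1 / 2 : ℝ) • (P + P') = (1 / 2 : ℝ) • ((M - P) + (M - P')) := by
    rw [smul_add]; module
  have h3 : frobSq (M - P) ≤ frobSq (M - (1 / 2 : ℝ) • (P + P')) := hP.2 _ hmid
  rw [hmid1, frobSq_smul, frobSq_add] at h3
  have h4 : frobSq ((M - P) - (M - P')) =
      frobSq (M - P) - 2 * ip (M - P) (M - P') + frobSq (M - P') := frobSq_sub _ _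
  have h5 : 0 ≤ frobSq ((M - P) - (M - P')) := frobSq_nonneg _
  have h6 : frobSq ((M - P) - (M - P')) = 0 := by nlinarith [frobSq_nonneg ((M-P)-(M-P'))]
  have h7 : (M - P) - (M - P') = 0 := frobSq_eq_zero h6
  have : P' - P = 0 := by rw [← h7]; abel
  exact (sub_eq_zero.mp this).symm

lemma proj_vi {C : Set (Mat k)}
    (hconv : ∀ P Y : Mat k, P ∈ C → Y ∈ C → ∀ t : ℝ, 0 ≤ t → t ≤ 1 → P + t • (Y - P) ∈ C)
    {M P : Mat k} (h : IsProjOn C M P) : ∀ Y ∈ C, ip (M - P) (Y - P) ≤ 0 := by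
  intro Y hY
  set c := ip (M - P) (Y - P) with hc
  set d := frobSq (Y - P) with hd
  have key : ∀ t : ℝ, 0 ≤ t → t ≤ 1 → 2 * t * c ≤ t ^ 2 * d := by
    intro t ht0 ht1
    have hmem := hconv P Y h.1 hY t ht0 ht1
    have hle := h.2 _ hmem
    have heq : M - (P + t • (Y - P)) = (M - P) - t • (Y - P) := by abel
    rw [heq, frobSq_sub (M - P) (t • (Y - P)), ip_smul_right, frobSq_smul,
      ← hc, ← hd] at hle
    linarith
  by_contra hcpos
  push_neg at hcpos
  have hd0 : 0 ≤ d := frobSq_nonneg _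
  rcases eq_or_lt_of_le hd0 with hdz | hdp
  · have := key 1 zero_le_one le_rfl
    rw [← hdz] at this; nlinarith
  · set t := min 1 (c / d) with htdef
    have ht0 : 0 < t := lt_min one_pos (div_pos hcpos hdp)
    have ht1 : t ≤ 1 := min_le_left _ _
    have htcd : t * d ≤ c := by
      have : t ≤ c / d := min_le_right _ _
      calc t * d ≤ (c / d) * d := by nlinarith
        _ = c := by field_simp
    have := key t (le_of_lt ht0) ht1
    nlinarith

lemma ip_neg_right (X Z : Mat k) : ip X (-Z) = -ip X Z := by
  simp [ip, Matrix.mul_neg]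

lemma psd_convex :
    ∀ P Y : Mat k, P ∈ {Y : Mat k | Y.PosSemidef} → Y ∈ {Y : Mat k | Y.PosSemidef} →
      ∀ t : ℝ, 0 ≤ t → t ≤ 1 → P + t • (Y - P) ∈ {Y : Mat k | Y.PosSemidef} := by
  intro P Y hP hY t ht0 ht1
  have hrw : P + t • (Y - P) = (1 - t) • P + t • Y := by module
  show (P + t • (Y - P)).PosSemidef
  rw [hrw]
  exact (psd_smul hP (by linarith)).add (psd_smul hY ht0)

lemma moreau (Pp Np : Mat k → Mat k)
    (hPp : ∀ M, IsProjOn {Y : Mat k | Y.PosSemidef} M (Pp M))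
    (hNp : ∀ M, IsProjOn {Y : Mat k | (-Y).PosSemidef} M (Np M))
    (M : Mat k) (hM : M.IsSymm) :
    (Pp M).PosSemidef ∧ (-(Np M)).PosSemidef ∧ M = Pp M + Np M ∧
      ip (Np M) (Pp M) = 0 := by
  have hP : (Pp M).PosSemidef := (hPp M).1
  have hPs : (Pp M).IsSymm := psd_isSymm hP
  have hVI : ∀ Y ∈ {Y : Mat k | Y.PosSemidef}, ip (M - Pp M) (Y - Pp M) ≤ 0 :=
    proj_vi psd_convex (hPp M)
  -- complementarity
  have comp : ip (M - Pp M) (Pp M) = 0 := by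
    have h0 := hVI 0 Matrix.PosSemidef.zero
    have h2 := hVI (Pp M + Pp M) (hP.add hP)
    rw [zero_sub, ip_neg_right] at h0
    have heq : Pp M + Pp M - Pp M = Pp M := by abel
    rw [heq] at h2
    linarith
  -- NSD part
  have hNSD : (-(M - Pp M)).PosSemidef := by
    refine Matrix.PosSemidef.of_dotProduct_mulVec_nonneg (isHermitian_of_isSymm ((hM.sub hPs).neg)) fun x => ?_
    have hvi := hVI (Pp M + Matrix.vecMulVec x x) (hP.add (psd_outer x))
    have heq : Pp M + Matrix.vecMulVec x x - Pp M = Matrix.vecMulVec x x := by abel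
    rw [heq, ip_outer] at hvi
    rw [Matrix.neg_mulVec]
    simp only [star_trivial, dotProduct_neg]
    linarith
  -- Np M = M - Pp M
  have hNp_eq : Np M = M - Pp M := by
    refine proj_unique (hNp M) ?_ ?_ ?_
    · simpa using hNSD
    · intro Y hY
      have hYpsd : (-Y).PosSemidef := hY
      have hipPY : ip (Pp M) Y ≤ 0 := by
        have := ip_psd_psd hP hYpsd
        rw [ip_neg_right] at this; linarith
      have hipPM : ip (Pp M) (M - Pp M) = 0 := by rw [ip_comm]; exact comp
      have hrw : M - Y = (M - (M - Pp M)) - (Y - (M - Pp M)) := by abel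
      have hrw2 : M - (M - Pp M) = Pp M := by abel
      rw [hrw, hrw2, frobSq_sub (Pp M) (Y - (M - Pp M)), ip_sub_right, hipPM]
      nlinarith [frobSq_nonneg (Y - (M - Pp M)), hipPY]
    · show (-(((1:ℝ)/2) • (Np M + (M - Pp M)))).PosSemidef
      have hrw : -(((1:ℝ)/2) • (Np M + (M - Pp M))) =
          ((1:ℝ)/2) • ((-(Np M)) + (-(M - Pp M))) := by module
      rw [hrw]
      exact psd_smul (((hNp M).1).add hNSD) (by norm_num)
  refine ⟨hP, by rw [hNp_eq]; exact hNSD, by rw [hNp_eq]; abel, ?_⟩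
  rw [hNp_eq]; exact comp

lemma ip_adjA {n m : ℕ} (A : Fin m → Matrix (Fin n) (Fin n) ℝ)
    (hA : ∀ i, (A i).IsSymm) (y : Fin m → ℝ) (X : Mat n) :
    ip (adjA A y) X = ∑ i, y i * calA A X i := by
  simp only [ip, adjA, calA, Matrix.transpose_sum, Matrix.transpose_smul, Matrix.sum_mul,
    Matrix.smul_mul, Matrix.trace_sum, Matrix.trace_smul, smul_eq_mul]
  exact Finset.sum_congr rfl fun i _ => by rw [hA i]

lemma calA_sub {n m : ℕ} (A : Fin m → Matrix (Fin n) (Fin n) ℝ)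
    (X Y : Mat n) (i : Fin m) : calA A (X - Y) i = calA A X i - calA A Y i := by
  simp [calA, Matrix.mul_sub]

lemma adjA_isSymm {n m : ℕ} (A : Fin m → Matrix (Fin n) (Fin n) ℝ)
    (hA : ∀ i, (A i).IsSymm) (y : Fin m → ℝ) : (adjA A y).IsSymm := by
  rw [adjA, Matrix.IsSymm, Matrix.transpose_sum]
  exact Finset.sum_congr rfl fun i _ => by rw [Matrix.transpose_smul, hA i]

end St8

open St8

/-- strong duality (zero duality gap and dual attainment) holds for the best
approximation problem iff `F(y) = A(P_{Sⁿ₊}(W + A*y)) − b` has a root `ȳ`; in that case the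
unique optimal solution is `X* = P_{Sⁿ₊}(W + A*ȳ)`; and `ȳ` is a root of `F` iff the triple
`(X̄, ȳ, Z̄)` with `X̄ = P_{Sⁿ₊}(W + A*ȳ)`, `Z̄ = −P_{Sⁿ₋}(W + A*ȳ)` satisfies the KKT
conditions. -/
theorem stmt8 {n m : ℕ} (A : Fin m → Matrix (Fin n) (Fin n) ℝ)
    (hA : ∀ i, (A i).IsSymm) (hLI : LinearIndependent ℝ A) (b : Fin m → ℝ)
    (hFne : (spectra A b).Nonempty)
    (W : Matrix (Fin n) (Fin n) ℝ) (hW : W.IsSymm)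
    -- the nearest-point projections onto `Sⁿ₊` and onto `Sⁿ₋ = −Sⁿ₊`:
    (Pp Np : Matrix (Fin n) (Fin n) ℝ → Matrix (Fin n) (Fin n) ℝ)
    (hPp : ∀ M, IsProjOn {Y : Matrix (Fin n) (Fin n) ℝ | Y.PosSemidef} M (Pp M))
    (hNp : ∀ M, IsProjOn {Y : Matrix (Fin n) (Fin n) ℝ | (-Y).PosSemidef} M (Np M))
    (pstar : ℝ)
    (hp : IsLeast {v : ℝ | ∃ X ∈ spectra A b, v = (1 / 2) * frobSq (X - W)} pstar) :
    -- (i) strong duality ↔ F has a root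
    ((∃ (y : Fin m → ℝ) (Z : Matrix (Fin n) (Fin n) ℝ), Z.PosSemidef ∧
        dualPhi A b W y Z = pstar) ↔
      (∃ ybar : Fin m → ℝ, calA A (Pp (W + adjA A ybar)) = b)) ∧
    -- (ii) for any root `ȳ`, `X* = P_{Sⁿ₊}(W + A*ȳ)` is the (unique) optimal solution
    (∀ ybar : Fin m → ℝ, calA A (Pp (W + adjA A ybar)) = b →
      Pp (W + adjA A ybar) ∈ spectra A b ∧
      (∀ Y ∈ spectra A b,
        (1 / 2) * frobSq (Pp (W + adjA A ybar) - W) ≤ (1 / 2) * frobSq (Y - W)) ∧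
      -- uniqueness of the optimal solution
      (∀ X' ∈ spectra A b,
        (∀ Y ∈ spectra A b, (1 / 2) * frobSq (X' - W) ≤ (1 / 2) * frobSq (Y - W)) →
          X' = Pp (W + adjA A ybar))) ∧
    -- (iii) `ȳ` is a root of `F` iff `(X̄, ȳ, Z̄)` satisfies the KKT conditions
    (∀ ybar : Fin m → ℝ,
      (calA A (Pp (W + adjA A ybar)) = b) ↔
      (Pp (W + adjA A ybar) - W - adjA A ybar - (-(Np (W + adjA A ybar))) = 0 ∧
        (-(Np (W + adjA A ybar))).PosSemidef ∧
        calA A (Pp (W + adjA A ybar)) = b ∧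
        (Pp (W + adjA A ybar)).PosSemidef ∧
        ((-(Np (W + adjA A ybar))) * Pp (W + adjA A ybar)).trace = 0)) := by
  classical
  -- Moreau package at W + adjA A y
  have pack : ∀ y : Fin m → ℝ,
      (Pp (W + adjA A y)).PosSemidef ∧ (-(Np (W + adjA A y))).PosSemidef ∧
      W + adjA A y = Pp (W + adjA A y) + Np (W + adjA A y) ∧
      ip (Np (W + adjA A y)) (Pp (W + adjA A y)) = 0 :=
    fun y => moreau Pp Np hPp hNp (W + adjA A y) (hW.add (adjA_isSymm A hA y))
  -- quantitative optimality
  have opt : ∀ y : Fin m → ℝ, calA A (Pp (W + adjA A y)) = b →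
      ∀ Y ∈ spectra A b,
      frobSq (Pp (W + adjA A y) - W) + frobSq (Y - Pp (W + adjA A y)) ≤ frobSq (Y - W) := by
    intro y hroot Y hY
    obtain ⟨hXpsd, hZpsd, hdec, hcomp⟩ := pack y
    set X := Pp (W + adjA A y) with hXdef
    have hrw : Y - W = (X - W) + (Y - X) := by abel
    rw [hrw, frobSq_add]
    have hadj : ip (adjA A y) (Y - X) = 0 := by
      rw [ip_adjA A hA]
      refine Finset.sum_eq_zero fun i _ => ?_
      rw [calA_sub, show calA A Y i = b i from congrFun hY.2 i,
        show calA A X i = b i from congrFun hroot i, sub_self, mul_zero]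
    have hNd : Np (W + adjA A y) = (W + adjA A y) - X := eq_sub_of_add_eq' hdec.symm
    have hu : X - W = adjA A y - Np (W + adjA A y) := by rw [hNd]; abel
    have hNpY : ip (Np (W + adjA A y)) Y ≤ 0 := by
      have h1 : 0 ≤ ip (-(Np (W + adjA A y))) Y := ip_psd_psd hZpsd hY.1
      rw [ip_neg_left] at h1; linarith
    have hipue : 0 ≤ ip (X - W) (Y - X) := by
      rw [hu, ip_sub_left, hadj, ip_sub_right, hcomp]
      linarith
    nlinarith [frobSq_nonneg (Y - X)]
  -- part (ii)
  have part2 : ∀ ybar : Fin m → ℝ, calA A (Pp (W + adjA A ybar)) = b →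
      Pp (W + adjA A ybar) ∈ spectra A b ∧
      (∀ Y ∈ spectra A b,
        (1 / 2) * frobSq (Pp (W + adjA A ybar) - W) ≤ (1 / 2) * frobSq (Y - W)) ∧
      (∀ X' ∈ spectra A b,
        (∀ Y ∈ spectra A b, (1 / 2) * frobSq (X' - W) ≤ (1 / 2) * frobSq (Y - W)) →
          X' = Pp (W + adjA A ybar)) := by
    intro y hroot
    obtain ⟨hXpsd, hZpsd, hdec, hcomp⟩ := pack y
    have hmem : Pp (W + adjA A y) ∈ spectra A b := ⟨hXpsd, hroot⟩
    refine ⟨hmem, fun Y hY => ?_, fun X' hX' hoptX' => ?_⟩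
    · have := opt y hroot Y hY
      nlinarith [frobSq_nonneg (Y - Pp (W + adjA A y))]
    · have h1 := opt y hroot X' hX'
      have h2 := hoptX' _ hmem
      have h3 : frobSq (X' - Pp (W + adjA A y)) ≤ 0 := by linarith
      have h4 : frobSq (X' - Pp (W + adjA A y)) = 0 :=
        le_antisymm h3 (frobSq_nonneg _)
      exact sub_eq_zero.mp (frobSq_eq_zero h4)
  refine ⟨⟨?_, ?_⟩, part2, ?_⟩
  · -- strong duality → root
    rintro ⟨y, Z, hZ, hdual⟩
    obtain ⟨X₀, hX₀, hval⟩ := hp.1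
    set u := X₀ - W with hudef
    set z := Z + adjA A y with hzdef
    -- dual value identity
    have hsum : (∑ i, y i * (b i - calA A W i)) = ip (adjA A y) u := by
      rw [ip_adjA A hA]
      refine Finset.sum_congr rfl fun i _ => ?_
      rw [hudef, calA_sub, show calA A X₀ i = b i from congrFun hX₀.2 i]
    have htr : (Z * W).trace = ip Z X₀ - ip Z u := by
      rw [← ip_of_symm_left (psd_isSymm hZ), hudef, ip_sub_right]; ring
    have hzu : ip z u = ip (adjA A y) u + ip Z u := by
      rw [hzdef, ip_add_left]; ring
    have hiden : (1 / 2) * frobSq u - dualPhi A b W y Z =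
        (1 / 2) * frobSq (u - z) + ip Z X₀ := by
      rw [dualPhi, ← hzdef, hsum, htr, frobSq_sub u z, ip_comm u z, hzu]; ring
    have hnn1 : 0 ≤ frobSq (u - z) := frobSq_nonneg _
    have hnn2 : 0 ≤ ip Z X₀ := ip_psd_psd hZ hX₀.1
    have hzero : (1 / 2) * frobSq (u - z) + ip Z X₀ = 0 := by
      rw [← hiden, hdual, hval]; ring
    have hE : u - z = 0 := frobSq_eq_zero (by linarith)
    have hZX : ip Z X₀ = 0 := by linarith
    -- X₀ is the projection of W + adjA A y onto the PSD cone
    have hproj : Pp (W + adjA A y) = X₀ := by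
      refine proj_unique (hPp (W + adjA A y)) hX₀.1 ?_ ?_
      · intro Y hYpsd
        have hMX : (W + adjA A y) - X₀ = -(u - z) - Z := by
          rw [hudef, hzdef]; abel
        rw [hE, neg_zero, zero_sub] at hMX
        have hip : ip ((W + adjA A y) - X₀) (Y - X₀) ≤ 0 := by
          rw [hMX, ip_neg_left, ip_sub_right, hZX]
          have : 0 ≤ ip Z Y := ip_psd_psd hZ hYpsd
          linarith
        have hrw : (W + adjA A y) - Y = ((W + adjA A y) - X₀) - (Y - X₀) := by abel
        rw [hrw, frobSq_sub ((W + adjA A y) - X₀) (Y - X₀)]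
        nlinarith [frobSq_nonneg (Y - X₀)]
      · show ((1 / 2 : ℝ) • (Pp (W + adjA A y) + X₀)).PosSemidef
        exact psd_smul ((hPp (W + adjA A y)).1.add hX₀.1) (by norm_num)
    exact ⟨y, by rw [hproj]; exact hX₀.2⟩
  · -- root → strong duality
    rintro ⟨y, hroot⟩
    obtain ⟨hXpsd, hZpsd, hdec, hcomp⟩ := pack y
    set X := Pp (W + adjA A y) with hXdef
    -- pstar = (1/2) frobSq (X - W)
    have hmemS : (1 / 2) * frobSq (X - W) ∈
        {v : ℝ | ∃ X ∈ spectra A b, v = (1 / 2) * frobSq (X - W)} :=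
      ⟨X, ⟨hXpsd, hroot⟩, rfl⟩
    have hle1 : pstar ≤ (1 / 2) * frobSq (X - W) := hp.2 hmemS
    obtain ⟨X₀, hX₀, hval⟩ := hp.1
    have hge := opt y hroot X₀ hX₀
    have hpstar : pstar = (1 / 2) * frobSq (X - W) := by
      have := frobSq_nonneg (X₀ - X)
      have h2 : frobSq (X - W) ≤ frobSq (X₀ - W) := by linarith
      have : (1 / 2) * frobSq (X - W) ≤ pstar := by rw [hval]; linarith
      linarith
    refine ⟨y, -(Np (W + adjA A y)), hZpsd, ?_⟩
    have hNd : Np (W + adjA A y) = (W + adjA A y) - X := eq_sub_of_add_eq' hdec.symm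
    have h1 : -(Np (W + adjA A y)) + adjA A y = X - W := by rw [hNd]; abel
    have hsum : (∑ i, y i * (b i - calA A W i)) = ip (adjA A y) (X - W) := by
      rw [ip_adjA A hA]
      refine Finset.sum_congr rfl fun i _ => ?_
      rw [calA_sub, show calA A X i = b i from congrFun hroot i]
    have htr : ((-(Np (W + adjA A y))) * W).trace = -ip (-(Np (W + adjA A y))) (X - W) := by
      rw [← ip_of_symm_left (psd_isSymm hZpsd), ip_sub_right, ip_neg_left, ip_neg_left,
        hcomp]
      ring
    have hfin : ip (adjA A y) (X - W) + ip (-(Np (W + adjA A y))) (X - W) =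
        frobSq (X - W) := by
      rw [← ip_add_left, show adjA A y + -(Np (W + adjA A y)) = X - W by rw [← h1]; abel,
        frobSq_eq_ip]
    rw [dualPhi, hsum, htr, show -(Np (W + adjA A y)) + adjA A y = X - W from h1, hpstar]
    linarith [hfin]
  · -- part (iii)
    intro y
    obtain ⟨hXpsd, hZpsd, hdec, hcomp⟩ := pack y
    constructor
    · intro hroot
      refine ⟨?_, hZpsd, hroot, hXpsd, ?_⟩
      · have h : Pp (W + adjA A y) - W - adjA A y - -(Np (W + adjA A y)) =
            (Pp (W + adjA A y) + Np (W + adjA A y)) - (W + adjA A y) := by abel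
        rw [h, ← hdec, sub_self]
      · rw [← ip_of_symm_left (psd_isSymm hZpsd), ip_neg_left, hcomp, neg_zero]
    · exact fun h => h.2.2.1
end
end

section
/- Let f = {V R Vᵀ : R ∈ S^r₊} be the minimal face of Sⁿ₊ containing the nonempty spectrahedron F = {X ⪰ 0 : A(X) = b} (V with orthonormal columns and range(V) = range(X̂) for some X̂ in the relative interior of F), let W ∈ Sⁿ, and define F_f(y) = A(P_f(W + A*(y))) − b. Suppose ȳ ∈ ℝᵐ satisfies F_f(ȳ) = 0 and let λ¹, …, λᵏ ∈ ℝᵐ be linearly independent solutions of the auxiliary system (0 ≠ A*(λⁱ) ⪰ 0, ⟨b, λⁱ⟩ = 0). Then F_f(ȳ + v) = 0 for all v in the span of {λ¹, …, λᵏ}; in particular the solution set {y : F_f(y) = 0} contains at least k linearly independent points. -/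
open Matrix Set

noncomputable section

/-- `f` is a face of the convex cone `K`. -/
def IsFaceOfCone {k : ℕ} (f K : Set (Matrix (Fin k) (Fin k) ℝ)) : Prop :=
  f ⊆ K ∧ Convex ℝ f ∧ (∀ c : ℝ, 0 ≤ c → ∀ x ∈ f, c • x ∈ f) ∧
    ∀ x ∈ K, ∀ y ∈ K, x + y ∈ f → x ∈ f ∧ y ∈ f

/-- `f` is the minimal face of the cone `K` containing the set `C`. -/
def IsMinFace {k : ℕ} (f K C : Set (Matrix (Fin k) (Fin k) ℝ)) : Prop :=
  IsFaceOfCone f K ∧ C ⊆ f ∧ ∀ g, IsFaceOfCone g K → C ⊆ g → f ⊆ g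

namespace Stmt9Aux

variable {n r : ℕ}

/-- Trace inner product. -/
def ip (X Y : Matrix (Fin n) (Fin n) ℝ) : ℝ := (Xᵀ * Y).trace

lemma ip_symm (X Y : Matrix (Fin n) (Fin n) ℝ) : ip X Y = ip Y X := by
  unfold ip
  conv_rhs => rw [← Matrix.trace_transpose, Matrix.transpose_mul, Matrix.transpose_transpose]

lemma frobSq_add (X Y : Matrix (Fin n) (Fin n) ℝ) :
    frobSq (X + Y) = frobSq X + 2 * ip X Y + frobSq Y := by
  have h := ip_symm Y X
  unfold frobSq ip at *
  rw [Matrix.transpose_add, add_mul, mul_add, mul_add, Matrix.trace_add, Matrix.trace_add,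
    Matrix.trace_add]
  linarith

lemma frobSq_smul (c : ℝ) (X : Matrix (Fin n) (Fin n) ℝ) :
    frobSq (c • X) = c ^ 2 * frobSq X := by
  unfold frobSq
  rw [Matrix.transpose_smul, Matrix.smul_mul, Matrix.mul_smul, Matrix.trace_smul,
    Matrix.trace_smul, smul_eq_mul, smul_eq_mul]
  ring

lemma frobSq_sub (X Y : Matrix (Fin n) (Fin n) ℝ) :
    frobSq (X - Y) = frobSq X - 2 * ip X Y + frobSq Y := by
  rw [sub_eq_add_neg, frobSq_add]
  have h1 : ip X (-Y) = -ip X Y := by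
    unfold ip; rw [Matrix.mul_neg, Matrix.trace_neg]
  have h2 : frobSq (-Y) = frobSq Y := by
    unfold frobSq; rw [Matrix.transpose_neg, neg_mul_neg]
  rw [h1, h2]; ring

lemma ip_sub_left (X Y Z : Matrix (Fin n) (Fin n) ℝ) : ip (X - Y) Z = ip X Z - ip Y Z := by
  unfold ip; rw [Matrix.transpose_sub, sub_mul, Matrix.trace_sub]

lemma frobSq_eq_sum (M : Matrix (Fin n) (Fin n) ℝ) :
    frobSq M = ∑ i, ∑ j, M j i * M j i := by
  simp [frobSq, Matrix.trace, Matrix.diag, Matrix.mul_apply]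

lemma frobSq_nonneg (M : Matrix (Fin n) (Fin n) ℝ) : 0 ≤ frobSq M := by
  rw [frobSq_eq_sum]
  exact Finset.sum_nonneg fun _ _ => Finset.sum_nonneg fun _ _ => mul_self_nonneg _

lemma frobSq_eq_zero {M : Matrix (Fin n) (Fin n) ℝ} (h : frobSq M = 0) : M = 0 := by
  rw [frobSq_eq_sum] at h
  ext i j
  have h1 := (Finset.sum_eq_zero_iff_of_nonneg
    (fun x _ => Finset.sum_nonneg fun y _ => mul_self_nonneg _)).mp h j (Finset.mem_univ j)
  have h2 := (Finset.sum_eq_zero_iff_of_nonneg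
    (fun y _ => mul_self_nonneg (M y j))).mp h1 i (Finset.mem_univ i)
  simpa using mul_self_eq_zero.mp h2

lemma trace_psd_mul_nonneg {Z X : Matrix (Fin n) (Fin n) ℝ} (hZ : Z.PosSemidef)
    (hX : X.PosSemidef) : 0 ≤ (Z * X).trace := by
  obtain ⟨B, hB⟩ : ∃ B : Matrix (Fin n) (Fin n) ℝ, Z = Bᴴ * B := by
    open scoped MatrixOrder in exact CStarAlgebra.nonneg_iff_eq_star_mul_self.mp hZ.nonneg
  obtain ⟨C, hC⟩ : ∃ C : Matrix (Fin n) (Fin n) ℝ, X = Cᴴ * C := by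
    open scoped MatrixOrder in exact CStarAlgebra.nonneg_iff_eq_star_mul_self.mp hX.nonneg
  rw [Matrix.conjTranspose_eq_transpose_of_trivial] at hB hC
  subst hB hC
  have h1 : (Bᵀ * B * (Cᵀ * C)).trace = frobSq (C * Bᵀ) := by
    calc (Bᵀ * B * (Cᵀ * C)).trace = (Bᵀ * (B * (Cᵀ * C))).trace := by
          rw [Matrix.mul_assoc]
      _ = ((B * (Cᵀ * C)) * Bᵀ).trace := Matrix.trace_mul_comm _ _
      _ = frobSq (C * Bᵀ) := by
          simp [frobSq, Matrix.transpose_mul, Matrix.mul_assoc]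
  rw [h1]; exact frobSq_nonneg _

lemma psd_of_trace_zero {Z : Matrix (Fin n) (Fin n) ℝ} (hZ : Z.PosSemidef)
    (h : Z.trace = 0) : Z = 0 := by
  obtain ⟨B, hB⟩ : ∃ B : Matrix (Fin n) (Fin n) ℝ, Z = Bᴴ * B := by
    open scoped MatrixOrder in exact CStarAlgebra.nonneg_iff_eq_star_mul_self.mp hZ.nonneg
  rw [Matrix.conjTranspose_eq_transpose_of_trivial] at hB
  subst hB
  have hB0 : B = 0 := frobSq_eq_zero h
  simp [hB0]

lemma psd_smul {X : Matrix (Fin n) (Fin n) ℝ} (hX : X.PosSemidef) {c : ℝ} (hc : 0 ≤ c) :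
    (c • X).PosSemidef := by
  refine ⟨?_, fun x => ?_⟩
  · have hs : Xᵀ = X := by
      rw [← Matrix.conjTranspose_eq_transpose_of_trivial]; exact hX.1
    simp [Matrix.IsHermitian, Matrix.conjTranspose_smul, hs]
  · exact (hX.smul hc).2 x

lemma proj_unique {C : Set (Matrix (Fin n) (Fin n) ℝ)} (hC : Convex ℝ C)
    {M P Q : Matrix (Fin n) (Fin n) ℝ} (hP : IsProjOn C M P) (hQ : IsProjOn C M Q) :
    P = Q := by
  have hd : frobSq (M - P) = frobSq (M - Q) := le_antisymm (hP.2 Q hQ.1) (hQ.2 P hP.1)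
  have hmid : (1/2 : ℝ) • P + (1/2 : ℝ) • Q ∈ C :=
    hC hP.1 hQ.1 (by norm_num) (by norm_num) (by norm_num)
  have h1 := hP.2 _ hmid
  have e1 : M - ((1/2 : ℝ) • P + (1/2 : ℝ) • Q) = (1/2 : ℝ) • ((M - P) + (M - Q)) := by
    module
  rw [e1, frobSq_smul, frobSq_add] at h1
  have e2 : Q - P = (M - P) - (M - Q) := by module
  have h3 : frobSq (Q - P) = frobSq (M - P) - 2 * ip (M - P) (M - Q) + frobSq (M - Q) := by
    rw [e2, frobSq_sub]
  have h4 : frobSq (Q - P) ≤ 0 := by nlinarith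
  have h5 : Q - P = 0 := frobSq_eq_zero (le_antisymm h4 (frobSq_nonneg _))
  exact (sub_eq_zero.mp h5).symm

lemma proj_shift (V : Matrix (Fin n) (Fin r) ℝ)
    {f : Set (Matrix (Fin n) (Fin n) ℝ)}
    (hf : f = {Y : Matrix (Fin n) (Fin n) ℝ |
        ∃ R : Matrix (Fin r) (Fin r) ℝ, R.PosSemidef ∧ Y = V * R * Vᵀ})
    (hC : Convex ℝ f)
    (Pf : Matrix (Fin n) (Fin n) ℝ → Matrix (Fin n) (Fin n) ℝ)
    (hPf : ∀ M, IsProjOn f M (Pf M))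
    (M D : Matrix (Fin n) (Fin n) ℝ) (hD : Dᵀ = D) (hDV : Vᵀ * D * V = 0) :
    Pf (M + D) = Pf M := by
  have key : ∀ Y ∈ f, ip D Y = 0 := by
    intro Y hY
    rw [hf] at hY
    obtain ⟨R, hR, rfl⟩ := hY
    unfold ip
    rw [hD]
    calc (D * (V * R * Vᵀ)).trace = ((D * V * R) * Vᵀ).trace := by
          simp only [Matrix.mul_assoc]
      _ = (Vᵀ * (D * V * R)).trace := Matrix.trace_mul_comm _ _
      _ = ((Vᵀ * D * V) * R).trace := by simp only [Matrix.mul_assoc]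
      _ = 0 := by rw [hDV, Matrix.zero_mul, Matrix.trace_zero]
  have hexp : ∀ Y ∈ f, frobSq (M + D - Y) = frobSq (M - Y) + (2 * ip M D + frobSq D)
      - 2 * ip Y D := by
    intro Y hY
    have e : M + D - Y = (M - Y) + D := by abel
    rw [e, frobSq_add, ip_sub_left]
    ring
  have hproj : IsProjOn f (M + D) (Pf M) := by
    refine ⟨(hPf M).1, fun Y hY => ?_⟩
    rw [hexp _ (hPf M).1, hexp _ hY]
    have k1 : ip (Pf M) D = 0 := by rw [ip_symm]; exact key _ (hPf M).1
    have k2 : ip Y D = 0 := by rw [ip_symm]; exact key _ hY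
    have := (hPf M).2 Y hY
    rw [k1, k2]
    linarith
  exact proj_unique hC (hPf (M + D)) hproj

end Stmt9Aux

open Stmt9Aux

/-- if `ȳ` is a root of `F_f(y) = A(P_f(W + A*y)) − b` and `λ¹, …, λᵏ` are
linearly independent solutions of the auxiliary system, then `F_f(ȳ + v) = 0` for every
`v` in their span; in particular `{y : F_f(y) = 0}` contains at least `k` linearly
independent points. -/
theorem stmt9 {n m r k : ℕ} (A : Fin m → Matrix (Fin n) (Fin n) ℝ)
    (hA : ∀ i, (A i).IsSymm) (hLI : LinearIndependent ℝ A) (b : Fin m → ℝ)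
    (hFne : (spectra A b).Nonempty)
    (V : Matrix (Fin n) (Fin r) ℝ) (hV : Vᵀ * V = 1)
    (f : Set (Matrix (Fin n) (Fin n) ℝ))
    (hf : f = {Y : Matrix (Fin n) (Fin n) ℝ |
        ∃ R : Matrix (Fin r) (Fin r) ℝ, R.PosSemidef ∧ Y = V * R * Vᵀ})
    (hmin : IsMinFace f {Y : Matrix (Fin n) (Fin n) ℝ | Y.PosSemidef} (spectra A b))
    (W : Matrix (Fin n) (Fin n) ℝ) (hW : W.IsSymm)
    -- the nearest-point projection onto the face `f`:
    (Pf : Matrix (Fin n) (Fin n) ℝ → Matrix (Fin n) (Fin n) ℝ)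
    (hPf : ∀ M, IsProjOn f M (Pf M))
    (ybar : Fin m → ℝ) (hroot : calA A (Pf (W + adjA A ybar)) = b)
    (lam : Fin k → (Fin m → ℝ)) (hlamLI : LinearIndependent ℝ lam)
    (haux : ∀ i, adjA A (lam i) ≠ 0 ∧ (adjA A (lam i)).PosSemidef ∧
      ∑ j, b j * lam i j = 0) :
    (∀ v ∈ Submodule.span ℝ (Set.range lam),
        calA A (Pf (W + adjA A (ybar + v))) = b) ∧
    ∃ g : Fin k → (Fin m → ℝ), LinearIndependent ℝ g ∧
      ∀ i, calA A (Pf (W + adjA A (g i))) = b := by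
  -- linearity of adjA
  have hadj_add : ∀ u v : Fin m → ℝ, adjA A (u + v) = adjA A u + adjA A v := by
    intro u v
    simp [adjA, add_smul, Finset.sum_add_distrib]
  have hadj_smul : ∀ (c : ℝ) (v : Fin m → ℝ), adjA A (c • v) = c • adjA A v := by
    intro c v
    simp [adjA, smul_smul, Finset.smul_sum]
  have hadj_zero : adjA A (0 : Fin m → ℝ) = 0 := by simp [adjA]
  have hadj_symm : ∀ v : Fin m → ℝ, (adjA A v)ᵀ = adjA A v := by
    intro v
    unfold adjA
    rw [Matrix.transpose_sum]
    exact Finset.sum_congr rfl fun i _ => by rw [Matrix.transpose_smul, hA i]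
  -- Step A : Vᵀ (A* λᵢ) V = 0
  have hZV : ∀ i, Vᵀ * adjA A (lam i) * V = 0 := by
    intro i
    obtain ⟨hne, hZpsd, hbl⟩ := haux i
    set Z := adjA A (lam i) with hZdef
    have hface : IsFaceOfCone {Y | Y.PosSemidef ∧ (Z * Y).trace = 0}
        {Y : Matrix (Fin n) (Fin n) ℝ | Y.PosSemidef} := by
      refine ⟨fun Y hY => hY.1, ?_, ?_, ?_⟩
      · intro Y1 hY1 Y2 hY2 a c ha hc hac
        refine ⟨(psd_smul hY1.1 ha).add (psd_smul hY2.1 hc), ?_⟩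
        rw [Matrix.mul_add, Matrix.trace_add, Matrix.mul_smul, Matrix.mul_smul,
          Matrix.trace_smul, Matrix.trace_smul, hY1.2, hY2.2]
        simp
      · intro c hc x hx
        exact ⟨psd_smul hx.1 hc, by
          rw [Matrix.mul_smul, Matrix.trace_smul, hx.2]; simp⟩
      · intro x hx y hy hxy
        have hx' : 0 ≤ (Z * x).trace := trace_psd_mul_nonneg hZpsd hx
        have hy' : 0 ≤ (Z * y).trace := trace_psd_mul_nonneg hZpsd hy
        have hsum : (Z * x).trace + (Z * y).trace = 0 := by
          rw [← Matrix.trace_add, ← Matrix.mul_add]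
          exact hxy.2
        exact ⟨⟨hx, by linarith⟩, ⟨hy, by linarith⟩⟩
    have hsub : spectra A b ⊆ {Y | Y.PosSemidef ∧ (Z * Y).trace = 0} := by
      intro X hX
      refine ⟨hX.1, ?_⟩
      have ht : (Z * X).trace = ∑ j, lam i j * (A j * X).trace := by
        rw [hZdef]
        unfold adjA
        rw [Finset.sum_mul, Matrix.trace_sum]
        exact Finset.sum_congr rfl fun j _ => by
          rw [Matrix.smul_mul, Matrix.trace_smul, smul_eq_mul]
      have hcal : ∀ j, (A j * X).trace = b j := fun j => congrFun hX.2 j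
      rw [ht]
      simp only [hcal]
      rw [← hbl]
      exact Finset.sum_congr rfl fun j _ => mul_comm _ _
    have hfg : f ⊆ {Y | Y.PosSemidef ∧ (Z * Y).trace = 0} := hmin.2.2 _ hface hsub
    have hVVt : V * Vᵀ ∈ f := by
      rw [hf]
      exact ⟨1, Matrix.PosSemidef.one, by rw [Matrix.mul_one]⟩
    have htr : (Z * (V * Vᵀ)).trace = 0 := (hfg hVVt).2
    have hVZV : (Vᵀ * Z * V).PosSemidef := by
      have h := hZpsd.conjTranspose_mul_mul_same V
      rwa [Matrix.conjTranspose_eq_transpose_of_trivial] at h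
    have htr2 : (Vᵀ * Z * V).trace = 0 := by
      calc (Vᵀ * Z * V).trace = (Vᵀ * (Z * V)).trace := by rw [Matrix.mul_assoc]
        _ = ((Z * V) * Vᵀ).trace := Matrix.trace_mul_comm _ _
        _ = (Z * (V * Vᵀ)).trace := by rw [Matrix.mul_assoc]
        _ = 0 := htr
    exact psd_of_trace_zero hVZV htr2
  -- extend to the span
  have hspanZ : ∀ v ∈ Submodule.span ℝ (Set.range lam), Vᵀ * adjA A v * V = 0 := by
    intro v hv
    induction hv using Submodule.span_induction with
    | mem x hx => obtain ⟨i, rfl⟩ := hx; exact hZV i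
    | zero => simp [hadj_zero]
    | add x y hx' hy' hx hy =>
        rw [hadj_add, Matrix.mul_add, Matrix.add_mul, hx, hy, add_zero]
    | smul c x hx' hx =>
        rw [hadj_smul, Matrix.mul_smul, Matrix.smul_mul, hx, smul_zero]
  -- part 1
  have part1 : ∀ v ∈ Submodule.span ℝ (Set.range lam),
      calA A (Pf (W + adjA A (ybar + v))) = b := by
    intro v hv
    have hsplit : W + adjA A (ybar + v) = (W + adjA A ybar) + adjA A v := by
      rw [hadj_add]; abel
    rw [hsplit, proj_shift V hf hmin.1.2.1 Pf hPf _ _ (hadj_symm v) (hspanZ v hv)]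
    exact hroot
  refine ⟨part1, ?_⟩
  by_cases hyb : ybar ∈ Submodule.span ℝ (Set.range lam)
  · refine ⟨lam, hlamLI, fun i => ?_⟩
    have h1 : lam i = ybar + (lam i - ybar) := by abel
    rw [h1]
    exact part1 _ (Submodule.sub_mem _ (Submodule.subset_span ⟨i, rfl⟩) hyb)
  · refine ⟨fun i => ybar + lam i, ?_, fun i =>
      part1 _ (Submodule.subset_span ⟨i, rfl⟩)⟩
    rw [Fintype.linearIndependent_iff]
    intro a ha
    have hsum : (∑ i, a i) • ybar + ∑ i, a i • lam i = 0 := by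
      rw [Finset.sum_smul]
      rw [← Finset.sum_add_distrib]
      simpa [smul_add] using ha
    have hs0 : (∑ i, a i) = 0 := by
      by_contra hs
      apply hyb
      have hy : ybar = (∑ i, a i)⁻¹ • (-(∑ i, a i • lam i)) := by
        have : (∑ i, a i) • ybar = -(∑ i, a i • lam i) := by
          rw [eq_neg_iff_add_eq_zero]; exact hsum
        rw [← this, smul_smul, inv_mul_cancel₀ hs, one_smul]
      rw [hy]
      exact Submodule.smul_mem _ _ (Submodule.neg_mem _ (Submodule.sum_mem _
        fun i _ => Submodule.smul_mem _ _ (Submodule.subset_span ⟨i, rfl⟩)))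
    rw [hs0, zero_smul, zero_add] at hsum
    exact Fintype.linearIndependent_iff.mp hlamLI a hsum
end
end

section
/- Suppose strict feasibility fails for the nonempty spectrahedron F = {X ⪰ 0 : A(X) = b} (there is no X ≻ 0 with A(X) = b), and let X = V D Vᵀ ∈ F where V has orthonormal columns and D ≻ 0 is diagonal. Then for any solution λ of the auxiliary system one has ∑_{i=1}^{m} λᵢ Aᵢ V = 0; in particular, the matrices A₁V, …, AₘV are linearly dependent. -/
open Matrix Set

noncomputable section

lemma trace_transpose_mul_self_eq_zero {p q : ℕ} (C : Matrix (Fin p) (Fin q) ℝ)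
    (h : (Cᵀ * C).trace = 0) : C = 0 := by
  have h' : ∑ j, ∑ i, C i j * C i j = 0 := by
    simpa [Matrix.trace, Matrix.mul_apply, Matrix.diag] using h
  ext i j
  have hj := (Finset.sum_eq_zero_iff_of_nonneg (fun j _ =>
    Finset.sum_nonneg fun i _ => mul_self_nonneg (C i j))).mp h' j (by simp)
  have hi := (Finset.sum_eq_zero_iff_of_nonneg (fun i _ =>
    mul_self_nonneg (C i j))).mp hj i (by simp)
  simpa using mul_self_eq_zero.mp hi

/-- if strict feasibility fails and `X = V D Vᵀ ∈ F` with `V` having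
orthonormal columns and `D ≻ 0` diagonal, then any solution `λ` of the auxiliary system
satisfies `∑ᵢ λᵢ Aᵢ V = 0`; in particular `A₁V, …, AₘV` are linearly dependent. -/
theorem stmt10 {n m r : ℕ} (A : Fin m → Matrix (Fin n) (Fin n) ℝ)
    (hA : ∀ i, (A i).IsSymm) (hLI : LinearIndependent ℝ A) (b : Fin m → ℝ)
    (hFne : (spectra A b).Nonempty)
    (hnostrict : ¬ ∃ X : Matrix (Fin n) (Fin n) ℝ, X.PosDef ∧ calA A X = b)
    (V : Matrix (Fin n) (Fin r) ℝ) (hV : Vᵀ * V = 1)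
    (d : Fin r → ℝ) (hd : ∀ i, 0 < d i)
    (hXF : V * Matrix.diagonal d * Vᵀ ∈ spectra A b)
    (lam : Fin m → ℝ) (hlam0 : adjA A lam ≠ 0)
    (hlampsd : (adjA A lam).PosSemidef) (hblam : ∑ i, b i * lam i = 0) :
    (∑ i, lam i • (A i * V)) = 0 ∧
      ¬ LinearIndependent ℝ (fun i : Fin m => A i * V) := by
  set X := V * Matrix.diagonal d * Vᵀ with hXdef
  set S := adjA A lam with hSdef
  have hb : ∀ i, (A i * X).trace = b i := fun i => congrFun hXF.2 i
  have htr : (S * X).trace = 0 := by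
    have h1 : (S * X).trace = ∑ i, lam i * (A i * X).trace := by
      simp [hSdef, adjA, Finset.sum_mul, Matrix.smul_mul, Matrix.trace_smul, smul_eq_mul]
    rw [h1, ← hblam]
    exact Finset.sum_congr rfl fun i _ => by rw [hb i, mul_comm]
  set R := (open scoped MatrixOrder in CFC.sqrt S) with hRdef
  have hRR : R * R = S := (open scoped MatrixOrder in CFC.sqrt_mul_sqrt_self S hlampsd.nonneg)
  have hRsym : Rᵀ = R := by
    have := (open scoped MatrixOrder in (CFC.sqrt_nonneg S).posSemidef.1)
    simpa [Matrix.IsHermitian, Matrix.conjTranspose_eq_transpose_of_trivial] using this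
  set W := V * Matrix.diagonal (fun i => Real.sqrt (d i)) with hWdef
  have hWW : W * Wᵀ = X := by
    rw [hWdef, hXdef, Matrix.transpose_mul, Matrix.diagonal_transpose]
    rw [Matrix.mul_assoc, ← Matrix.mul_assoc (Matrix.diagonal _), Matrix.diagonal_mul_diagonal]
    have : (fun i => Real.sqrt (d i) * Real.sqrt (d i)) = d := by
      funext i; exact Real.mul_self_sqrt (hd i).le
    rw [this, ← Matrix.mul_assoc]
  set C := R * W with hCdef
  have htrC : (Cᵀ * C).trace = 0 := by
    have : Cᵀ * C = Wᵀ * (S * W) := by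
      rw [hCdef, Matrix.transpose_mul, hRsym, Matrix.mul_assoc, ← Matrix.mul_assoc R, hRR,
        ← Matrix.mul_assoc]
    rw [this, Matrix.trace_mul_comm, Matrix.mul_assoc, hWW]
    exact htr
  have hC0 : C = 0 := trace_transpose_mul_self_eq_zero C htrC
  have hSW : S * W = 0 := by
    rw [← hRR, Matrix.mul_assoc, ← hCdef, hC0, Matrix.mul_zero]
  have hSV : S * V = 0 := by
    have h2 : S * W * Matrix.diagonal (fun i => (Real.sqrt (d i))⁻¹) = 0 := by
      rw [hSW, Matrix.zero_mul]
    rw [hWdef, ← Matrix.mul_assoc] at h2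
    rw [Matrix.mul_assoc, Matrix.diagonal_mul_diagonal] at h2
    have : (fun i => Real.sqrt (d i) * (Real.sqrt (d i))⁻¹) = fun _ => (1:ℝ) := by
      funext i
      exact mul_inv_cancel₀ (ne_of_gt (Real.sqrt_pos.mpr (hd i)))
    rw [this] at h2
    simpa using h2
  have hmain : (∑ i, lam i • (A i * V)) = 0 := by
    have h3 : S * V = ∑ i, lam i • (A i * V) := by
      show adjA A lam * V = _
      unfold adjA
      rw [Matrix.sum_mul]
      exact Finset.sum_congr rfl fun i _ => Matrix.smul_mul _ _ _
    rw [← h3, hSV]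
  refine ⟨hmain, fun hLI' => ?_⟩
  have := (Fintype.linearIndependent_iff.mp hLI') lam hmain
  refine hlam0 ?_
  show (∑ i, lam i • A i) = 0
  exact Finset.sum_eq_zero fun i _ => by rw [this i, zero_smul]
end
end

section
/- Let X₁, X₂ ∈ F = {X ⪰ 0 : A(X) = b} and suppose X₁ is a nondegenerate point of F. Then for every γ ∈ (0, 1], the point γX₁ + (1 − γ)X₂ is a nondegenerate point of F. -/
open Matrix Set

noncomputable section

/-- The PSD cone `Sⁿ₊` as a subset of matrix space. -/
def PSDcone (n : ℕ) : Set (Matrix (Fin n) (Fin n) ℝ) := {Y | Y.PosSemidef}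

/-- `face(X, Sⁿ₊)`: the minimal face of `Sⁿ₊` containing `X`, i.e. the intersection of
all faces of `Sⁿ₊` containing `X`. -/
def minFaceOfPoint {n : ℕ} (X : Matrix (Fin n) (Fin n) ℝ) :
    Set (Matrix (Fin n) (Fin n) ℝ) :=
  ⋂₀ {g | IsFaceOfCone g (PSDcone n) ∧ X ∈ g}

/-- The conjugate face `f^Δ = f^⊥ ∩ Sⁿ₊` of a subset `f` of `Sⁿ₊`. -/
def conjFace {n : ℕ} (f : Set (Matrix (Fin n) (Fin n) ℝ)) :
    Set (Matrix (Fin n) (Fin n) ℝ) :=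
  {Z | Z.PosSemidef ∧ ∀ Y ∈ f, (Y * Z).trace = 0}

/-- `X` is a nondegenerate point: `span(face(X,Sⁿ₊)^Δ) ∩ range(A*) = {0}`. -/
def Nondegenerate {n m : ℕ} (A : Fin m → Matrix (Fin n) (Fin n) ℝ)
    (X : Matrix (Fin n) (Fin n) ℝ) : Prop :=
  Submodule.span ℝ (conjFace (minFaceOfPoint X)) ⊓ Submodule.span ℝ (Set.range A) = ⊥

lemma psd_trace_nonneg' {n : ℕ} {M : Matrix (Fin n) (Fin n) ℝ} (hM : M.PosSemidef) :
    0 ≤ M.trace := by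
  rw [Matrix.trace]
  apply Finset.sum_nonneg
  intro i _
  have := hM.diag_nonneg (i := i)
  simpa using this

lemma trace_mul_nonneg' {n : ℕ} {X Z : Matrix (Fin n) (Fin n) ℝ}
    (hX : X.PosSemidef) (hZ : Z.PosSemidef) : 0 ≤ (X * Z).trace := by
  open scoped MatrixOrder in
  have hB : (CFC.sqrt X).PosSemidef := (CFC.sqrt_nonneg X).posSemidef
  open scoped MatrixOrder in
  have h1 : X * Z = CFC.sqrt X * (CFC.sqrt X * Z) := by
    rw [← mul_assoc, CFC.sqrt_mul_sqrt_self X hX.nonneg]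
  rw [h1, Matrix.trace_mul_comm]
  have h2 : CFC.sqrt X * Z * CFC.sqrt X = (CFC.sqrt X)ᴴ * Z * CFC.sqrt X := by
    rw [hB.isHermitian.eq]
  have := hZ.conjTranspose_mul_mul_same (CFC.sqrt X)
  rw [← h2] at this
  exact psd_trace_nonneg' this

lemma psd_smul' {n : ℕ} {c : ℝ} (hc : 0 ≤ c) {M : Matrix (Fin n) (Fin n) ℝ}
    (hM : M.PosSemidef) : (c • M).PosSemidef := by
  constructor
  · unfold Matrix.IsHermitian; rw [Matrix.conjTranspose_smul, hM.1.eq]; simp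
  · intro x
    exact (hM.smul hc).2 x

/-- For `Z` PSD, the set `{Y PSD : ⟨Y,Z⟩ = 0}` is a face of the PSD cone. -/
lemma isFace_perp {n : ℕ} {Z : Matrix (Fin n) (Fin n) ℝ} (hZ : Z.PosSemidef) :
    IsFaceOfCone {Y : Matrix (Fin n) (Fin n) ℝ | Y.PosSemidef ∧ (Y * Z).trace = 0}
      (PSDcone n) := by
  refine ⟨fun Y hY => hY.1, ?_, ?_, ?_⟩
  · intro x hx y hy a b ha hb hab
    refine ⟨(psd_smul' ha hx.1).add (psd_smul' hb hy.1), ?_⟩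
    rw [Matrix.add_mul, Matrix.trace_add, Matrix.smul_mul, Matrix.smul_mul,
      Matrix.trace_smul, Matrix.trace_smul, hx.2, hy.2]
    simp
  · intro c hc x hx
    refine ⟨psd_smul' hc hx.1, ?_⟩
    rw [Matrix.smul_mul, Matrix.trace_smul, hx.2]
    simp
  · intro x hx y hy hxy
    have hx' := trace_mul_nonneg' hx hZ
    have hy' := trace_mul_nonneg' hy hZ
    have hsum : (x * Z).trace + (y * Z).trace = 0 := by
      rw [← Matrix.trace_add, ← Matrix.add_mul]
      exact hxy.2
    constructor
    · exact ⟨hx, by linarith⟩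
    · exact ⟨hy, by linarith⟩

/-- If `X` is PSD and `⟨X,Z⟩ = 0` with `Z` PSD, then `Z ∈ conjFace (minFaceOfPoint X)`. -/
lemma mem_conjFace_of_perp {n : ℕ} {X Z : Matrix (Fin n) (Fin n) ℝ}
    (hX : X.PosSemidef) (hZ : Z.PosSemidef) (h : (X * Z).trace = 0) :
    Z ∈ conjFace (minFaceOfPoint X) := by
  refine ⟨hZ, fun Y hY => ?_⟩
  have hsub : minFaceOfPoint X ⊆
      {Y : Matrix (Fin n) (Fin n) ℝ | Y.PosSemidef ∧ (Y * Z).trace = 0} :=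
    Set.sInter_subset_of_mem ⟨isFace_perp hZ, hX, h⟩
  exact (hsub hY).2

/-- if `X₁, X₂ ∈ F` and `X₁` is nondegenerate, then every point
`γ X₁ + (1 − γ) X₂` with `γ ∈ (0, 1]` is a nondegenerate point of `F`. -/
theorem stmt14 {n m : ℕ} (A : Fin m → Matrix (Fin n) (Fin n) ℝ)
    (hA : ∀ i, (A i).IsSymm) (hLI : LinearIndependent ℝ A) (b : Fin m → ℝ)
    (X₁ X₂ : Matrix (Fin n) (Fin n) ℝ)
    (hX₁ : X₁ ∈ spectra A b) (hX₂ : X₂ ∈ spectra A b)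
    (hnd : Nondegenerate A X₁)
    (γ : ℝ) (hγ : γ ∈ Set.Ioc (0 : ℝ) 1) :
    Nondegenerate A (γ • X₁ + (1 - γ) • X₂) := by
  obtain ⟨hγ0, hγ1⟩ := hγ
  set P := γ • X₁ + (1 - γ) • X₂ with hP
  -- key: conjFace (minFaceOfPoint P) ⊆ conjFace (minFaceOfPoint X₁)
  have hsub : conjFace (minFaceOfPoint P) ⊆ conjFace (minFaceOfPoint X₁) := by
    rintro Z ⟨hZ, hperp⟩
    have hPmem : P ∈ minFaceOfPoint P := fun g hg => hg.2
    have hPZ : (P * Z).trace = 0 := hperp P hPmem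
    have hexp : (P * Z).trace = γ * (X₁ * Z).trace + (1 - γ) * (X₂ * Z).trace := by
      rw [hP, Matrix.add_mul, Matrix.trace_add, Matrix.smul_mul, Matrix.smul_mul,
        Matrix.trace_smul, Matrix.trace_smul]
      simp
    have h1 := trace_mul_nonneg' hX₁.1 hZ
    have h2 := trace_mul_nonneg' hX₂.1 hZ
    have hX₁Z : (X₁ * Z).trace = 0 := by nlinarith
    exact mem_conjFace_of_perp hX₁.1 hZ hX₁Z
  have hspan := Submodule.span_mono (R := ℝ) hsub
  unfold _root_.Nondegenerate at hnd ⊢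
  rw [← le_bot_iff, ← hnd]
  exact inf_le_inf_right _ hspan
end
end
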